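/- Let d = 1 and let r ≥ 2 be a prime, N = 2(r−1). There exists an affine map f : Δ_N → ℝ on the standard N-simplex, with vertices colored with 3 colors with color classes satisfying |C_0| = |C_1| = r−1 and |C_2| = 1 and with the N+1 image points pairwise distinct, such that T(f) = ⌈(r−1)/2⌉! · ⌊(r−1)/2⌋!. That is, the lower bound T(f) ≥ ⌈(r−1)/2⌉! · ⌊(r−1)/2⌋! for d = 1 is optimal. -/

import Mathlib

open scoped Classical

/-- A set of points in `ℝ^d` is in *general position* if for every `j < d`,
no `j + 2` of the points lie on a common `j`-dimensional affine subspace. -/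
def GenPos (d : ℕ) (P : Set (Fin d → ℝ)) : Prop :=
  ∀ j < d, ∀ S : Finset (Fin d → ℝ), ↑S ⊆ P → S.card = j + 2 →
    ¬ ∃ A : AffineSubspace ℝ (Fin d → ℝ),
        Module.finrank ℝ A.direction = j ∧ (S : Set (Fin d → ℝ)) ⊆ (A : Set (Fin d → ℝ))

/-- `tverbergCount d N r f c` is the number of unordered colored Tverberg partitions for the
affine map `f` on the standard `N`-simplex (vertex `i` being `Pi.single i 1`), whose vertices
are colored by `c` with `d + 2` colors: partitions of the `N + 1` vertices into `r` rainbow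
blocks whose images under `f` have intersecting convex hulls. -/
noncomputable def tverbergCount (d N r : ℕ) (f : (Fin (N + 1) → ℝ) →ᵃ[ℝ] (Fin d → ℝ))
    (c : Fin (N + 1) → Fin (d + 2)) : ℕ :=
  Set.ncard { P : Finset (Finset (Fin (N + 1))) |
    P.card = r ∧
    (∀ B ∈ P, ∀ B' ∈ P, B ≠ B' → Disjoint B B') ∧
    P.biUnion id = Finset.univ ∧
    (∀ B ∈ P, ∀ j : Fin (d + 2), (B.filter fun i => c i = j).card ≤ 1) ∧
    ∃ x : Fin d → ℝ, ∀ B ∈ P,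
      x ∈ convexHull ℝ ((fun i => f (Pi.single i 1)) '' (B : Set (Fin (N + 1)))) }

section AuxTverberg
open Finset
open Fin.NatCast
noncomputable def fAff (N : ℕ) : (Fin (N+1) → ℝ) →ᵃ[ℝ] (Fin 1 → ℝ) :=
  (LinearMap.pi (fun _ : Fin 1 => ∑ i : Fin (N+1), (i : ℝ) • LinearMap.proj i)).toAffineMap

lemma fAff_single (N : ℕ) (i : Fin (N+1)) : fAff N (Pi.single i 1) = fun _ => (i : ℝ) := by
  funext t
  simp [fAff, LinearMap.pi_apply, LinearMap.proj, Pi.single_apply]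

noncomputable def cstA : ℝ →ᵃ[ℝ] (Fin 1 → ℝ) := (LinearMap.pi fun _ : Fin 1 => LinearMap.id).toAffineMap

noncomputable def ev0 : (Fin 1 → ℝ) →ᵃ[ℝ] ℝ := (LinearMap.proj 0).toAffineMap

lemma hull_fwd {α : Type*} (v : α → ℝ) (B : Set α) (x : Fin 1 → ℝ)
    (h : x ∈ convexHull ℝ ((fun i => (fun _ => v i : Fin 1 → ℝ)) '' B)) :
    x 0 ∈ convexHull ℝ (v '' B) := by
  have := Set.mem_image_of_mem ev0 h
  rw [ev0.image_convexHull] at this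
  have himg : ev0 '' ((fun i => (fun _ => v i : Fin 1 → ℝ)) '' B) = v '' B := by
    rw [← Set.image_comp]; rfl
  rw [himg] at this
  exact this

lemma hull_bwd {α : Type*} (v : α → ℝ) (B : Set α) (y : ℝ)
    (h : y ∈ convexHull ℝ (v '' B)) :
    (fun _ => y : Fin 1 → ℝ) ∈ convexHull ℝ ((fun i => (fun _ => v i : Fin 1 → ℝ)) '' B) := by
  have := Set.mem_image_of_mem cstA h
  rw [cstA.image_convexHull] at this
  have himg : cstA '' (v '' B) = (fun i => (fun _ => v i : Fin 1 → ℝ)) '' B := by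
    rw [← Set.image_comp]; rfl
  rw [himg] at this
  exact this

lemma exists_le_of_mem_convexHull {s : Set ℝ} {y : ℝ} (h : y ∈ convexHull ℝ s) :
    ∃ a ∈ s, a ≤ y := by
  by_contra hc
  push_neg at hc
  exact lt_irrefl y (convexHull_min (fun a ha => hc a ha) (convex_Ioi y) h)

lemma exists_ge_of_mem_convexHull {s : Set ℝ} {y : ℝ} (h : y ∈ convexHull ℝ s) :
    ∃ a ∈ s, y ≤ a := by
  by_contra hc
  push_neg at hc
  exact lt_irrefl y (convexHull_min (fun a ha => hc a ha) (convex_Iio y) h)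

lemma mem_hull_pair {a b y : ℝ} (h1 : a ≤ y) (h2 : y ≤ b) :
    y ∈ convexHull ℝ ({a, b} : Set ℝ) := by
  rw [convexHull_pair, segment_eq_Icc (h1.trans h2)]
  exact ⟨h1, h2⟩

lemma sum_inter_card {α : Type*} [Fintype α] [DecidableEq α] (P : Finset (Finset α))
    (hdisj : ∀ B ∈ P, ∀ B' ∈ P, B ≠ B' → Disjoint B B')
    (hcover : P.biUnion id = Finset.univ) (T : Finset α) :
    ∑ B ∈ P, (B ∩ T).card = T.card := by
  rw [← Finset.card_biUnion (fun B hB B' hB' hne => (hdisj B hB B' hB' hne).mono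
    inter_subset_left inter_subset_left)]
  congr 1
  ext a
  simp only [Finset.mem_biUnion, Finset.mem_inter]
  constructor
  · rintro ⟨B, hB, _, ha⟩; exact ha
  · intro ha
    have : a ∈ P.biUnion id := by rw [hcover]; exact Finset.mem_univ a
    rcases Finset.mem_biUnion.1 this with ⟨B, hB, haB⟩
    exact ⟨B, hB, haB, ha⟩

lemma card_filter_val_lt (n t : ℕ) (ht : t ≤ n) :
    (Finset.univ.filter fun i : Fin n => (i:ℕ) < t).card = t := by
  have : (Finset.univ.filter fun i : Fin n => (i:ℕ) < t).card
      = ((Finset.range n).filter fun i => i < t).card := by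
    rw [Finset.card_filter, Finset.card_filter, Fin.sum_univ_eq_sum_range (fun i => if i < t then 1 else 0)]
  rw [this]
  have : (Finset.range n).filter (fun i => i < t) = Finset.range t := by
    ext i; simp only [Finset.mem_filter, Finset.mem_range]; omega
  rw [this, Finset.card_range]

lemma all_one_of_sum_eq_card {α : Type*} [DecidableEq α] (s : Finset α) (f : α → ℕ)
    (h1 : ∀ i ∈ s, 1 ≤ f i) (h2 : ∑ i ∈ s, f i = s.card) : ∀ i ∈ s, f i = 1 := by
  intro i hi
  by_contra hne
  have h2f : 2 ≤ f i := by have := h1 i hi; omega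
  have := Finset.add_sum_erase s f hi
  have hrest : (s.erase i).card ≤ ∑ j ∈ s.erase i, f j := by
    calc (s.erase i).card = ∑ j ∈ s.erase i, 1 := by rw [Finset.sum_const, smul_eq_mul, mul_one]
    _ ≤ ∑ j ∈ s.erase i, f j := Finset.sum_le_sum (fun j hj => h1 j (Finset.mem_of_mem_erase hj))
  have hcard : (s.erase i).card = s.card - 1 := Finset.card_erase_of_mem hi
  have hpos : 1 ≤ s.card := Finset.card_pos.2 ⟨i, hi⟩
  omega

def col (r : ℕ) (i : ℕ) : Fin 3 :=
  if i < r/2 then 0 else if i < r - 1 then 1 else if i = r - 1 then 2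
  else if i < r + (r-1)/2 then 0 else 1

lemma card_le_sum_of_one_le {α : Type*} (s : Finset α) (f : α → ℕ)
    (h : ∀ i ∈ s, 1 ≤ f i) : s.card ≤ ∑ j ∈ s, f j := by
  calc s.card = ∑ j ∈ s, 1 := by rw [Finset.sum_const, smul_eq_mul, mul_one]
  _ ≤ ∑ j ∈ s, f j := Finset.sum_le_sum h

lemma struct (r N : ℕ) (hr : 2 ≤ r) (hN : N = 2*(r-1))
    (P : Finset (Finset (Fin (N+1))))
    (hcard : P.card = r)
    (hdisj : ∀ B ∈ P, ∀ B' ∈ P, B ≠ B' → Disjoint B B')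
    (hcover : P.biUnion id = Finset.univ)
    (hrain : ∀ B ∈ P, ∀ j : Fin 3, (B.filter fun i : Fin (N+1) => col r (i:ℕ) = j).card ≤ 1)
    (x : Fin 1 → ℝ)
    (hx : ∀ B ∈ P, x ∈ convexHull ℝ
      ((fun i : Fin (N+1) => (fun _ => ((i:ℕ):ℝ) : Fin 1 → ℝ)) '' (B : Set (Fin (N+1))))) :
    ({((r-1:ℕ) : Fin (N+1))} : Finset (Fin (N+1))) ∈ P ∧
    ∀ B ∈ P, B ≠ {((r-1:ℕ) : Fin (N+1))} →
      ∃ u v : Fin (N+1), (u:ℕ) < r-1 ∧ r-1 < (v:ℕ) ∧ col r (u:ℕ) ≠ col r (v:ℕ) ∧ B = {u, v} := by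
  subst hN
  set y := x 0 with hy
  -- each block has an element below y and one above y
  have hab : ∀ B ∈ P, (∃ a ∈ B, ((a:ℕ):ℝ) ≤ y) ∧ (∃ b ∈ B, y ≤ ((b:ℕ):ℝ)) := by
    intro B hB
    have h1 := hull_fwd (fun i : Fin (2*(r-1)+1) => ((i:ℕ):ℝ)) B x (hx B hB)
    constructor
    · rcases exists_le_of_mem_convexHull h1 with ⟨a, ha, hle⟩
      rcases ha with ⟨i, hi, rfl⟩
      exact ⟨i, hi, hle⟩
    · rcases exists_ge_of_mem_convexHull h1 with ⟨a, ha, hle⟩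
      rcases ha with ⟨i, hi, rfl⟩
      exact ⟨i, hi, hle⟩
  set L := Finset.univ.filter (fun i : Fin (2*(r-1)+1) => ((i:ℕ):ℝ) < y) with hL
  set R := Finset.univ.filter (fun i : Fin (2*(r-1)+1) => y < ((i:ℕ):ℝ)) with hR
  set E := Finset.univ.filter (fun i : Fin (2*(r-1)+1) => ((i:ℕ):ℝ) = y) with hE
  have hmemL : ∀ i : Fin (2*(r-1)+1), i ∈ L ↔ ((i:ℕ):ℝ) < y := by intro i; simp [hL]
  have hmemR : ∀ i : Fin (2*(r-1)+1), i ∈ R ↔ y < ((i:ℕ):ℝ) := by intro i; simp [hR]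
  have hmemE : ∀ i : Fin (2*(r-1)+1), i ∈ E ↔ ((i:ℕ):ℝ) = y := by intro i; simp [hE]
  have hcards : L.card + R.card + E.card = 2*(r-1)+1 := by
    have hU : (L ∪ R) ∪ E = Finset.univ := by
      ext i
      simp only [Finset.mem_union, hmemL i, hmemR i, hmemE i, Finset.mem_univ, iff_true]
      rcases lt_trichotomy (((i:ℕ):ℝ)) y with h | h | h
      · exact Or.inl (Or.inl h)
      · exact Or.inr h
      · exact Or.inl (Or.inr h)
    have hdLR : Disjoint L R := by
      rw [Finset.disjoint_left]
      intro i hiL hiR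
      rw [hmemL i] at hiL; rw [hmemR i] at hiR; linarith
    have hdLRE : Disjoint (L ∪ R) E := by
      rw [Finset.disjoint_left]
      intro i hi hiE
      rw [hmemE i] at hiE
      rcases Finset.mem_union.1 hi with h | h
      · rw [hmemL i] at h; linarith
      · rw [hmemR i] at h; linarith
    have := Finset.card_union_of_disjoint hdLRE
    rw [hU] at this
    rw [Finset.card_union_of_disjoint hdLR] at this
    simpa [Finset.card_univ] using this.symm
  have hE1 : E.card ≤ 1 := by
    rw [Finset.card_le_one]
    intro i hi j hj
    rw [hmemE i] at hi; rw [hmemE j] at hj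
    have : (i:ℕ) = (j:ℕ) := Nat.cast_injective (hi.trans hj.symm)
    exact Fin.ext this
  -- every block meets L ∪ E and R ∪ E
  have hBLE : ∀ B ∈ P, (B ∩ (L ∪ E)).Nonempty := by
    intro B hB
    rcases (hab B hB).1 with ⟨a, haB, hle⟩
    refine ⟨a, Finset.mem_inter.2 ⟨haB, Finset.mem_union.2 ?_⟩⟩
    rcases lt_or_eq_of_le hle with h | h
    · exact Or.inl ((hmemL a).2 h)
    · exact Or.inr ((hmemE a).2 h)
  have hBRE : ∀ B ∈ P, (B ∩ (R ∪ E)).Nonempty := by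
    intro B hB
    rcases (hab B hB).2 with ⟨a, haB, hle⟩
    refine ⟨a, Finset.mem_inter.2 ⟨haB, Finset.mem_union.2 ?_⟩⟩
    rcases lt_or_eq_of_le hle with h | h
    · exact Or.inl ((hmemR a).2 h)
    · exact Or.inr ((hmemE a).2 h.symm)
  have hsumL := sum_inter_card P hdisj hcover L
  have hsumR := sum_inter_card P hdisj hcover R
  -- E is nonempty
  have hEne : E.Nonempty := by
    by_contra hEe
    rw [Finset.not_nonempty_iff_eq_empty] at hEe
    have hLcard : r ≤ L.card := by
      refine le_trans (le_of_eq hcard.symm) (le_trans (card_le_sum_of_one_le _ _ (fun B hB => ?_)) (le_of_eq hsumL))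
      rcases hBLE B hB with ⟨a, ha⟩
      rw [hEe, Finset.union_empty] at ha
      exact Finset.card_pos.2 ⟨a, ha⟩
    have hRcard : r ≤ R.card := by
      refine le_trans (le_of_eq hcard.symm) (le_trans (card_le_sum_of_one_le _ _ (fun B hB => ?_)) (le_of_eq hsumR))
      rcases hBRE B hB with ⟨a, ha⟩
      rw [hEe, Finset.union_empty] at ha
      exact Finset.card_pos.2 ⟨a, ha⟩
    rw [hEe] at hcards
    simp only [Finset.card_empty] at hcards
    omega
  have hEcard : E.card = 1 := le_antisymm hE1 (Finset.card_pos.2 hEne)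
  rcases Finset.card_eq_one.1 hEcard with ⟨p, hEp⟩
  -- the block containing p
  have hpmem : p ∈ P.biUnion id := by rw [hcover]; exact Finset.mem_univ p
  rcases Finset.mem_biUnion.1 hpmem with ⟨B0, hB0P, hpB0⟩
  -- blocks other than B0 meet L and R
  have hmeet : ∀ B ∈ P, B ≠ B0 → 1 ≤ (B ∩ L).card ∧ 1 ≤ (B ∩ R).card := by
    intro B hB hne
    have hpB : p ∉ B := by
      intro hpB
      exact (Finset.disjoint_left.1 (hdisj B hB B0 hB0P hne)) hpB hpB0
    constructor
    · rcases hBLE B hB with ⟨a, ha⟩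
      rcases Finset.mem_inter.1 ha with ⟨haB, haLE⟩
      rcases Finset.mem_union.1 haLE with h | h
      · exact Finset.card_pos.2 ⟨a, Finset.mem_inter.2 ⟨haB, h⟩⟩
      · rw [hEp, Finset.mem_singleton] at h; subst h; exact absurd haB hpB
    · rcases hBRE B hB with ⟨a, ha⟩
      rcases Finset.mem_inter.1 ha with ⟨haB, haRE⟩
      rcases Finset.mem_union.1 haRE with h | h
      · exact Finset.card_pos.2 ⟨a, Finset.mem_inter.2 ⟨haB, h⟩⟩
      · rw [hEp, Finset.mem_singleton] at h; subst h; exact absurd haB hpB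
  have herasecard : (P.erase B0).card = r - 1 := by
    rw [Finset.card_erase_of_mem hB0P, hcard]
  -- lower bounds on L, R card
  have hLlow : r - 1 ≤ L.card := by
    have hsplit : (B0 ∩ L).card + ∑ B ∈ P.erase B0, (B ∩ L).card = ∑ B ∈ P, (B ∩ L).card :=
      Finset.add_sum_erase P (fun B => (B ∩ L).card) hB0P
    have hge : (P.erase B0).card ≤ ∑ B ∈ P.erase B0, (B ∩ L).card := card_le_sum_of_one_le (P.erase B0) (fun B => (B ∩ L).card)
      (fun B hB => (hmeet B (Finset.mem_of_mem_erase hB) (Finset.ne_of_mem_erase hB)).1)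
    omega
  have hRlow : r - 1 ≤ R.card := by
    have hsplit : (B0 ∩ R).card + ∑ B ∈ P.erase B0, (B ∩ R).card = ∑ B ∈ P, (B ∩ R).card :=
      Finset.add_sum_erase P (fun B => (B ∩ R).card) hB0P
    have hge : (P.erase B0).card ≤ ∑ B ∈ P.erase B0, (B ∩ R).card := card_le_sum_of_one_le (P.erase B0) (fun B => (B ∩ R).card)
      (fun B hB => (hmeet B (Finset.mem_of_mem_erase hB) (Finset.ne_of_mem_erase hB)).2)
    omega
  have hLcard : L.card = r - 1 := by omega
  have hRcard : R.card = r - 1 := by omega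
  -- B0 misses L and R; other blocks have exactly one elt in each
  have hB0L : (B0 ∩ L).card = 0 ∧ ∀ B ∈ P.erase B0, (B ∩ L).card = 1 := by
    have hsplit : (B0 ∩ L).card + ∑ B ∈ P.erase B0, (B ∩ L).card = ∑ B ∈ P, (B ∩ L).card :=
      Finset.add_sum_erase P (fun B => (B ∩ L).card) hB0P
    have h1 : (B0 ∩ L).card + ∑ B ∈ P.erase B0, (B ∩ L).card = r - 1 := by
      rw [hsplit, hsumL, hLcard]
    have h2 : r - 1 ≤ ∑ B ∈ P.erase B0, (B ∩ L).card := by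
      have hge : (P.erase B0).card ≤ ∑ B ∈ P.erase B0, (B ∩ L).card := card_le_sum_of_one_le (P.erase B0) (fun B => (B ∩ L).card)
        (fun B hB => (hmeet B (Finset.mem_of_mem_erase hB) (Finset.ne_of_mem_erase hB)).1)
      omega
    have h3 : (B0 ∩ L).card = 0 := by omega
    refine ⟨h3, all_one_of_sum_eq_card _ _
      (fun B hB => (hmeet B (Finset.mem_of_mem_erase hB) (Finset.ne_of_mem_erase hB)).1) ?_⟩
    rw [herasecard]; omega
  have hB0R : (B0 ∩ R).card = 0 ∧ ∀ B ∈ P.erase B0, (B ∩ R).card = 1 := by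
    have hsplit : (B0 ∩ R).card + ∑ B ∈ P.erase B0, (B ∩ R).card = ∑ B ∈ P, (B ∩ R).card :=
      Finset.add_sum_erase P (fun B => (B ∩ R).card) hB0P
    have h1 : (B0 ∩ R).card + ∑ B ∈ P.erase B0, (B ∩ R).card = r - 1 := by
      rw [hsplit, hsumR, hRcard]
    have h2 : r - 1 ≤ ∑ B ∈ P.erase B0, (B ∩ R).card := by
      have hge : (P.erase B0).card ≤ ∑ B ∈ P.erase B0, (B ∩ R).card := card_le_sum_of_one_le (P.erase B0) (fun B => (B ∩ R).card)
        (fun B hB => (hmeet B (Finset.mem_of_mem_erase hB) (Finset.ne_of_mem_erase hB)).2)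
      omega
    have h3 : (B0 ∩ R).card = 0 := by omega
    refine ⟨h3, all_one_of_sum_eq_card _ _
      (fun B hB => (hmeet B (Finset.mem_of_mem_erase hB) (Finset.ne_of_mem_erase hB)).2) ?_⟩
    rw [herasecard]; omega
  -- p has value r - 1
  have hyp : ((p:ℕ):ℝ) = y := (hmemE p).1 (hEp ▸ Finset.mem_singleton_self p)
  have hpval : (p:ℕ) = r - 1 := by
    have hLeq : L = Finset.univ.filter (fun i : Fin (2*(r-1)+1) => (i:ℕ) < (p:ℕ)) := by
      ext i
      rw [hmemL i, Finset.mem_filter]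
      simp only [Finset.mem_univ, true_and]
      rw [← hyp, Nat.cast_lt]
    have := card_filter_val_lt (2*(r-1)+1) (p:ℕ) (le_of_lt p.isLt)
    rw [← hLeq] at this
    omega
  have hpfin : p = ((r-1:ℕ) : Fin (2*(r-1)+1)) := by
    refine Fin.ext ?_
    rw [Fin.val_cast_of_lt (by omega), hpval]
  -- B0 = {p}
  have hB0L0 : B0 ∩ L = ∅ := Finset.card_eq_zero.1 hB0L.1
  have hB0R0 : B0 ∩ R = ∅ := Finset.card_eq_zero.1 hB0R.1
  have hB0eq : B0 = {p} := by
    apply Finset.Subset.antisymm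
    · intro i hiB0
      rw [Finset.mem_singleton]
      have hiL : i ∉ L := fun h =>
        Finset.notMem_empty i (hB0L0 ▸ Finset.mem_inter.2 ⟨hiB0, h⟩)
      have hiR : i ∉ R := fun h =>
        Finset.notMem_empty i (hB0R0 ▸ Finset.mem_inter.2 ⟨hiB0, h⟩)
      have hiE : i ∈ E := by
        rw [hmemE i]
        rw [hmemL i] at hiL
        rw [hmemR i] at hiR
        push_neg at hiL hiR
        linarith
      rw [hEp, Finset.mem_singleton] at hiE
      exact hiE
    · exact Finset.singleton_subset_iff.2 hpB0
  constructor
  · rw [← hpfin, ← hB0eq]; exact hB0P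
  · intro B hBP hBne
    have hBneB0 : B ≠ B0 := by rw [hB0eq, hpfin]; exact hBne
    have hBerase : B ∈ P.erase B0 := Finset.mem_erase.2 ⟨hBneB0, hBP⟩
    rcases Finset.card_eq_one.1 (hB0L.2 B hBerase) with ⟨u, hu⟩
    rcases Finset.card_eq_one.1 (hB0R.2 B hBerase) with ⟨v, hv⟩
    have huB : u ∈ B ∧ u ∈ L := Finset.mem_inter.1 (hu ▸ Finset.mem_singleton_self u)
    have hvB : v ∈ B ∧ v ∈ R := Finset.mem_inter.1 (hv ▸ Finset.mem_singleton_self v)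
    have hpnB : p ∉ B := fun hpB =>
      (Finset.disjoint_left.1 (hdisj B hBP B0 hB0P hBneB0)) hpB hpB0
    have hBeq : B = {u, v} := by
      apply Finset.Subset.antisymm
      · intro i hiB
        rcases lt_trichotomy (((i:ℕ):ℝ)) y with h | h | h
        · have : i ∈ B ∩ L := Finset.mem_inter.2 ⟨hiB, (hmemL i).2 h⟩
          rw [hu, Finset.mem_singleton] at this
          simp [this]
        · have : i ∈ E := (hmemE i).2 h
          rw [hEp, Finset.mem_singleton] at this
          exact absurd (this ▸ hiB) hpnB
        · have : i ∈ B ∩ R := Finset.mem_inter.2 ⟨hiB, (hmemR i).2 h⟩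
          rw [hv, Finset.mem_singleton] at this
          simp [this]
      · intro i hi
        rcases Finset.mem_insert.1 hi with h | h
        · exact h ▸ huB.1
        · rw [Finset.mem_singleton] at h
          exact h ▸ hvB.1
    have huval : (u:ℕ) < r - 1 := by
      have := (hmemL u).1 huB.2
      rw [← hyp, hpval] at this
      exact_mod_cast this
    have hvval : r - 1 < (v:ℕ) := by
      have := (hmemR v).1 hvB.2
      rw [← hyp, hpval] at this
      exact_mod_cast this
    refine ⟨u, v, huval, hvval, ?_, hBeq⟩
    intro hcc
    have huv : u ≠ v := fun h => by rw [h] at huval; omega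
    have hfil := hrain B hBP (col r (u:ℕ))
    have hufil : u ∈ B.filter (fun i : Fin (2*(r-1)+1) => col r (i:ℕ) = col r (u:ℕ)) :=
      Finset.mem_filter.2 ⟨huB.1, rfl⟩
    have hvfil : v ∈ B.filter (fun i : Fin (2*(r-1)+1) => col r (i:ℕ) = col r (u:ℕ)) :=
      Finset.mem_filter.2 ⟨hvB.1, hcc.symm⟩
    exact huv (Finset.card_le_one.1 hfil u hufil v hvfil)

lemma col_eq_zero_iff (r a : ℕ) : col r a = 0 ↔ (a < r/2 ∨ (r-1 < a ∧ a < r + (r-1)/2)) := by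
  unfold col
  split_ifs <;> simp_all [Fin.ext_iff] <;> omega

lemma col_eq_one_iff (r a : ℕ) (hr : 2 ≤ r) : col r a = 1 ↔ ((r/2 ≤ a ∧ a < r-1) ∨ r + (r-1)/2 ≤ a) := by
  unfold col
  split_ifs <;> simp_all [Fin.ext_iff, not_or] <;> omega

lemma col_eq_two_iff (r a : ℕ) (hr : 2 ≤ r) : col r a = 2 ↔ a = r-1 := by
  unfold col
  split_ifs <;> simp_all [Fin.ext_iff] <;> omega

lemma card_filter_fin (n : ℕ) (p : ℕ → Prop) [DecidablePred p] :
    (Finset.univ.filter fun i : Fin n => p (i:ℕ)).card = ((Finset.range n).filter p).card := by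
  rw [Finset.card_filter, Finset.card_filter,
    Fin.sum_univ_eq_sum_range (fun i => if p i then 1 else 0)]

lemma count_cols (r N : ℕ) (hr : 2 ≤ r) (hN : N = 2*(r-1)) (j : Fin 3) :
    (Finset.univ.filter fun i : Fin (N+1) => col r (i:ℕ) = j).card
      = if (j:ℕ) = 2 then 1 else r - 1 := by
  subst hN
  rw [card_filter_fin (2*(r-1)+1) (fun a => col r a = j)]
  have hj : j = 0 ∨ j = 1 ∨ j = 2 := by omega
  rcases hj with rfl | rfl | rfl
  · have : (Finset.range (2*(r-1)+1)).filter (fun a => col r a = 0)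
        = Finset.range (r/2) ∪ Finset.Ico r (r + (r-1)/2) := by
      ext a
      simp only [Finset.mem_filter, Finset.mem_range, Finset.mem_union, Finset.mem_Ico,
        col_eq_zero_iff]
      omega
    rw [this, Finset.card_union_of_disjoint, Finset.card_range, Nat.card_Ico]
    · simp; omega
    · rw [Finset.disjoint_left]
      intro a ha hb
      simp only [Finset.mem_range] at ha
      simp only [Finset.mem_Ico] at hb
      omega
  · have : (Finset.range (2*(r-1)+1)).filter (fun a => col r a = 1)
        = Finset.Ico (r/2) (r-1) ∪ Finset.Ico (r + (r-1)/2) (2*(r-1)+1) := by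
      ext a
      simp only [Finset.mem_filter, Finset.mem_range, Finset.mem_union, Finset.mem_Ico,
        col_eq_one_iff _ _ hr]
      omega
    rw [this, Finset.card_union_of_disjoint, Nat.card_Ico, Nat.card_Ico]
    · simp; omega
    · rw [Finset.disjoint_left]
      intro a ha hb
      simp only [Finset.mem_Ico] at ha hb
      omega
  · have : (Finset.range (2*(r-1)+1)).filter (fun a => col r a = 2) = {r-1} := by
      ext a
      simp only [Finset.mem_filter, Finset.mem_range, Finset.mem_singleton,
        col_eq_two_iff r a hr]
      omega
    rw [this]
    simp

def pt (N a : ℕ) : Fin (N+1) := (a : Fin (N+1))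

def Phi (r N : ℕ) (σ : Equiv.Perm (Fin (r/2))) (τ : Equiv.Perm (Fin ((r-1)/2))) :
    Finset (Finset (Fin (N+1))) :=
  insert {pt N (r-1)}
    ((Finset.univ.image fun j : Fin (r/2) =>
        ({pt N (j:ℕ), pt N (r + (r-1)/2 + (σ j : ℕ))} : Finset (Fin (N+1)))) ∪
     (Finset.univ.image fun j : Fin ((r-1)/2) =>
        ({pt N (r/2 + (j:ℕ)), pt N (r + (τ j : ℕ))} : Finset (Fin (N+1)))))

lemma ptval (N a : ℕ) (h : a ≤ N) : (pt N a : ℕ) = a := Fin.val_cast_of_lt (by omega)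

lemma pt_inj (N a b : ℕ) (ha : a ≤ N) (hb : b ≤ N) (h : pt N a = pt N b) : a = b := by
  have := congrArg Fin.val h
  rwa [ptval N a ha, ptval N b hb] at this

lemma mem_pair {N : ℕ} (i : Fin (N+1)) (x y : Fin (N+1)) :
    i ∈ ({x, y} : Finset (Fin (N+1))) ↔ i = x ∨ i = y := by
  simp

lemma mem_Phi (r N : ℕ) (σ : Equiv.Perm (Fin (r/2))) (τ : Equiv.Perm (Fin ((r-1)/2)))
    (B : Finset (Fin (N+1))) :
    B ∈ Phi r N σ τ ↔ B = {pt N (r-1)} ∨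
      (∃ j : Fin (r/2), B = {pt N (j:ℕ), pt N (r + (r-1)/2 + (σ j : ℕ))}) ∨
      (∃ j : Fin ((r-1)/2), B = {pt N (r/2 + (j:ℕ)), pt N (r + (τ j : ℕ))}) := by
  simp [Phi, eq_comm]

lemma Phi_card (r N : ℕ) (hr : 2 ≤ r) (hN : N = 2*(r-1)) (σ : Equiv.Perm (Fin (r/2))) (τ : Equiv.Perm (Fin ((r-1)/2))) :
    (Phi r N σ τ).card = r := by
  have hkm : r/2 + (r-1)/2 = r - 1 := by omega
  have hb1 : ∀ j : Fin (r/2), (j:ℕ) ≤ N := fun j => by have := j.isLt; omega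
  have hb2 : ∀ j : Fin (r/2), r + (r-1)/2 + (σ j : ℕ) ≤ N := fun j => by
    have := (σ j).isLt; omega
  have hb3 : ∀ j : Fin ((r-1)/2), r/2 + (j:ℕ) ≤ N := fun j => by have := j.isLt; omega
  have hb4 : ∀ j : Fin ((r-1)/2), r + (τ j : ℕ) ≤ N := fun j => by have := (τ j).isLt; omega
  have hrN : r - 1 ≤ N := by omega
  rw [Phi]
  rw [Finset.card_insert_of_notMem, Finset.card_union_of_disjoint]
  · rw [Finset.card_image_of_injOn, Finset.card_image_of_injOn]
    · simp only [Finset.card_univ, Fintype.card_fin]; omega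
    · intro j _ j' _ hjj
      have hjj2 : ({pt N (r/2 + (j:ℕ)), pt N (r + (τ j : ℕ))} : Finset (Fin (N+1)))
          = {pt N (r/2 + (j':ℕ)), pt N (r + (τ j' : ℕ))} := hjj
      have : pt N (r/2 + (j:ℕ)) ∈ ({pt N (r/2 + (j':ℕ)), pt N (r + (τ j' : ℕ))} : Finset _) := by
        rw [← hjj2]; simp
      rcases (mem_pair _ _ _).1 this with h | h
      · have := pt_inj N _ _ (hb3 j) (hb3 j') h
        exact Fin.ext (by omega)
      · have := pt_inj N _ _ (hb3 j) (hb4 j') h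
        have := j.isLt; have := (τ j').isLt; omega
    · intro j _ j' _ hjj
      have hjj2 : ({pt N (j:ℕ), pt N (r + (r-1)/2 + (σ j : ℕ))} : Finset (Fin (N+1)))
          = {pt N (j':ℕ), pt N (r + (r-1)/2 + (σ j' : ℕ))} := hjj
      have : pt N (j:ℕ) ∈ ({pt N (j':ℕ), pt N (r + (r-1)/2 + (σ j' : ℕ))} : Finset _) := by
        rw [← hjj2]; simp
      rcases (mem_pair _ _ _).1 this with h | h
      · exact Fin.ext (pt_inj N _ _ (hb1 j) (hb1 j') h)
      · have := pt_inj N _ _ (hb1 j) (hb2 j') h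
        have := j.isLt; omega
  · rw [Finset.disjoint_left]
    intro B hB hB'
    rcases Finset.mem_image.1 hB with ⟨j, _, rfl⟩
    rcases Finset.mem_image.1 hB' with ⟨j', _, hBeq⟩
    have : pt N (j:ℕ) ∈ ({pt N (r/2 + (j':ℕ)), pt N (r + (τ j' : ℕ))} : Finset _) := by
      rw [hBeq]; simp
    rcases (mem_pair _ _ _).1 this with h | h
    · have := pt_inj N _ _ (hb1 j) (hb3 j') h
      have := j.isLt; omega
    · have := pt_inj N _ _ (hb1 j) (hb4 j') h
      have := j.isLt; have := (τ j').isLt; omega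
  · intro hmem
    rcases Finset.mem_union.1 hmem with h | h
    · rcases Finset.mem_image.1 h with ⟨j, _, hBeq⟩
      have : pt N (j:ℕ) ∈ ({pt N (r-1)} : Finset (Fin (N+1))) := by
        rw [← hBeq]; simp
      rw [Finset.mem_singleton] at this
      have := pt_inj N _ _ (hb1 j) hrN this
      have := j.isLt; omega
    · rcases Finset.mem_image.1 h with ⟨j, _, hBeq⟩
      have : pt N (r + (τ j : ℕ)) ∈ ({pt N (r-1)} : Finset (Fin (N+1))) := by
        rw [← hBeq]; simp
      rw [Finset.mem_singleton] at this
      have := pt_inj N _ _ (hb4 j) hrN this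
      omega

lemma val_of_mem_pair {N : ℕ} {i : Fin (N+1)} {a b : ℕ}
    (h : i ∈ ({pt N a, pt N b} : Finset (Fin (N+1)))) (ha : a ≤ N) (hb : b ≤ N) :
    (i:ℕ) = a ∨ (i:ℕ) = b := by
  rcases (mem_pair i _ _).1 h with h | h
  · exact Or.inl (h ▸ ptval N a ha)
  · exact Or.inr (h ▸ ptval N b hb)

lemma eq_pt_of_val {N : ℕ} {i : Fin (N+1)} {a : ℕ} (ha : a ≤ N) (h : (i:ℕ) = a) :
    i = pt N a := Fin.ext (by rw [ptval N a ha, h])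

lemma Phi_disjoint (r N : ℕ) (hr : 2 ≤ r) (hN : N = 2*(r-1))
    (σ : Equiv.Perm (Fin (r/2))) (τ : Equiv.Perm (Fin ((r-1)/2))) :
    ∀ B ∈ Phi r N σ τ, ∀ B' ∈ Phi r N σ τ, B ≠ B' → Disjoint B B' := by
  have hb1 : ∀ j : Fin (r/2), (j:ℕ) ≤ N := fun j => by have := j.isLt; omega
  have hb2 : ∀ j : Fin (r/2), ∀ s : Fin (r/2), r + (r-1)/2 + (s:ℕ) ≤ N := fun j s => by
    have := s.isLt; omega
  have hb3 : ∀ j : Fin ((r-1)/2), r/2 + (j:ℕ) ≤ N := fun j => by have := j.isLt; omega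
  have hb4 : ∀ s : Fin ((r-1)/2), r + (s:ℕ) ≤ N := fun s => by have := s.isLt; omega
  have hrN : r - 1 ≤ N := by omega
  intro B hB B' hB' hne
  rw [Finset.disjoint_left]
  intro i hiB hiB'
  apply hne
  rcases (mem_Phi r N σ τ B).1 hB with rfl | ⟨j, rfl⟩ | ⟨j, rfl⟩ <;>
    rcases (mem_Phi r N σ τ B').1 hB' with rfl | ⟨j', rfl⟩ | ⟨j', rfl⟩
  · rfl
  · rw [Finset.mem_singleton] at hiB
    have h1 : (i:ℕ) = r-1 := hiB ▸ ptval N (r-1) hrN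
    have h2 := val_of_mem_pair hiB' (hb1 j') (hb2 j' (σ j'))
    have := j'.isLt; have := (σ j').isLt; omega
  · rw [Finset.mem_singleton] at hiB
    have h1 : (i:ℕ) = r-1 := hiB ▸ ptval N (r-1) hrN
    have h2 := val_of_mem_pair hiB' (hb3 j') (hb4 (τ j'))
    have := j'.isLt; have := (τ j').isLt; omega
  · rw [Finset.mem_singleton] at hiB'
    have h1 : (i:ℕ) = r-1 := hiB' ▸ ptval N (r-1) hrN
    have h2 := val_of_mem_pair hiB (hb1 j) (hb2 j (σ j))
    have := j.isLt; have := (σ j).isLt; omega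
  · -- A j vs A j'
    have h1 := val_of_mem_pair hiB (hb1 j) (hb2 j (σ j))
    have h2 := val_of_mem_pair hiB' (hb1 j') (hb2 j' (σ j'))
    have hj := j.isLt; have hj' := j'.isLt
    have hsj := (σ j).isLt; have hsj' := (σ j').isLt
    have : j = j' := by
      rcases h1 with h1 | h1 <;> rcases h2 with h2 | h2
      · exact Fin.ext (by omega)
      · omega
      · omega
      · exact σ.injective (Fin.ext (by omega))
    rw [this]
  · -- A j vs B j' : impossible
    have h1 := val_of_mem_pair hiB (hb1 j) (hb2 j (σ j))
    have h2 := val_of_mem_pair hiB' (hb3 j') (hb4 (τ j'))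
    have hj := j.isLt; have hj' := j'.isLt
    have hsj := (σ j).isLt; have htj' := (τ j').isLt
    omega
  · rw [Finset.mem_singleton] at hiB'
    have h1 : (i:ℕ) = r-1 := hiB' ▸ ptval N (r-1) hrN
    have h2 := val_of_mem_pair hiB (hb3 j) (hb4 (τ j))
    have := j.isLt; have := (τ j).isLt; omega
  · have h1 := val_of_mem_pair hiB (hb3 j) (hb4 (τ j))
    have h2 := val_of_mem_pair hiB' (hb1 j') (hb2 j' (σ j'))
    have hj := j.isLt; have hj' := j'.isLt
    have htj := (τ j).isLt; have hsj' := (σ j').isLt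
    omega
  · have h1 := val_of_mem_pair hiB (hb3 j) (hb4 (τ j))
    have h2 := val_of_mem_pair hiB' (hb3 j') (hb4 (τ j'))
    have hj := j.isLt; have hj' := j'.isLt
    have htj := (τ j).isLt; have htj' := (τ j').isLt
    have : j = j' := by
      rcases h1 with h1 | h1 <;> rcases h2 with h2 | h2
      · exact Fin.ext (by omega)
      · omega
      · omega
      · exact τ.injective (Fin.ext (by omega))
    rw [this]

lemma Phi_cover (r N : ℕ) (hr : 2 ≤ r) (hN : N = 2*(r-1))
    (σ : Equiv.Perm (Fin (r/2))) (τ : Equiv.Perm (Fin ((r-1)/2))) :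
    (Phi r N σ τ).biUnion id = Finset.univ := by
  apply Finset.eq_univ_of_forall
  intro i
  rw [Finset.mem_biUnion]
  have hiv := i.isLt
  have hcase : (i:ℕ) < r/2 ∨ (r/2 ≤ (i:ℕ) ∧ (i:ℕ) < r-1) ∨ (i:ℕ) = r-1 ∨
      (r ≤ (i:ℕ) ∧ (i:ℕ) < r + (r-1)/2) ∨ (r + (r-1)/2 ≤ (i:ℕ) ∧ (i:ℕ) ≤ N) := by omega
  rcases hcase with h | h | h | h | h
  · refine ⟨{pt N ((⟨(i:ℕ), h⟩ : Fin (r/2)):ℕ), pt N (r + (r-1)/2 + (σ ⟨(i:ℕ), h⟩ : ℕ))},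
      (mem_Phi r N σ τ _).2 (Or.inr (Or.inl ⟨⟨(i:ℕ), h⟩, rfl⟩)), ?_⟩
    have : i = pt N ((⟨(i:ℕ), h⟩ : Fin (r/2)):ℕ) := eq_pt_of_val (by simp; omega) rfl
    rw [← this]
    simp
  · refine ⟨{pt N (r/2 + ((⟨(i:ℕ) - r/2, by omega⟩ : Fin ((r-1)/2)):ℕ)),
      pt N (r + (τ ⟨(i:ℕ) - r/2, by omega⟩ : ℕ))},
      (mem_Phi r N σ τ _).2 (Or.inr (Or.inr ⟨⟨(i:ℕ) - r/2, by omega⟩, rfl⟩)), ?_⟩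
    have : i = pt N (r/2 + ((⟨(i:ℕ) - r/2, by omega⟩ : Fin ((r-1)/2)):ℕ)) :=
      eq_pt_of_val (by simp; omega) (by simp; omega)
    rw [← this]
    simp
  · refine ⟨{pt N (r-1)}, (mem_Phi r N σ τ _).2 (Or.inl rfl), ?_⟩
    have : i = pt N (r-1) := eq_pt_of_val (by omega) h
    rw [← this]
    simp
  · set j : Fin ((r-1)/2) := τ.symm ⟨(i:ℕ) - r, by omega⟩ with hj
    refine ⟨{pt N (r/2 + (j:ℕ)), pt N (r + (τ j : ℕ))},
      (mem_Phi r N σ τ _).2 (Or.inr (Or.inr ⟨j, rfl⟩)), ?_⟩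
    have hτ : (τ j : ℕ) = (i:ℕ) - r := by rw [hj, Equiv.apply_symm_apply]
    have : i = pt N (r + (τ j : ℕ)) := eq_pt_of_val (by have := (τ j).isLt; omega) (by omega)
    rw [← this]
    simp
  · set j : Fin (r/2) := σ.symm ⟨(i:ℕ) - (r + (r-1)/2), by omega⟩ with hj
    refine ⟨{pt N (j:ℕ), pt N (r + (r-1)/2 + (σ j : ℕ))},
      (mem_Phi r N σ τ _).2 (Or.inr (Or.inl ⟨j, rfl⟩)), ?_⟩
    have hσ : (σ j : ℕ) = (i:ℕ) - (r + (r-1)/2) := by rw [hj, Equiv.apply_symm_apply]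
    have : i = pt N (r + (r-1)/2 + (σ j : ℕ)) :=
      eq_pt_of_val (by have := (σ j).isLt; omega) (by omega)
    rw [← this]
    simp

lemma pair_filter_card_le {N r : ℕ} (u v : Fin (N+1)) (jc : Fin 3)
    (h : col r (u:ℕ) ≠ col r (v:ℕ)) :
    (({u, v} : Finset (Fin (N+1))).filter (fun i : Fin (N+1) => col r (i:ℕ) = jc)).card ≤ 1 := by
  rw [Finset.card_le_one]
  intro a ha b hb
  rcases Finset.mem_filter.1 ha with ⟨haM, hac⟩
  rcases Finset.mem_filter.1 hb with ⟨hbM, hbc⟩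
  rcases (mem_pair a u v).1 haM with ha' | ha' <;> rcases (mem_pair b u v).1 hbM with hb' | hb'
  · rw [ha', hb']
  · exfalso; rw [ha'] at hac; rw [hb'] at hbc; exact h (hac.trans hbc.symm)
  · exfalso; rw [ha'] at hac; rw [hb'] at hbc; exact h (hbc.trans hac.symm)
  · rw [ha', hb']

lemma Phi_rainbow (r N : ℕ) (hr : 2 ≤ r) (hN : N = 2*(r-1))
    (σ : Equiv.Perm (Fin (r/2))) (τ : Equiv.Perm (Fin ((r-1)/2))) :
    ∀ B ∈ Phi r N σ τ, ∀ jc : Fin 3,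
      (B.filter fun i : Fin (N+1) => col r (i:ℕ) = jc).card ≤ 1 := by
  intro B hB jc
  rcases (mem_Phi r N σ τ B).1 hB with rfl | ⟨j, rfl⟩ | ⟨j, rfl⟩
  · exact le_trans (Finset.card_filter_le _ _) (by simp)
  · apply pair_filter_card_le
    have hj := j.isLt; have hsj := (σ j).isLt
    rw [ptval N _ (by omega), ptval N _ (by omega)]
    rw [(col_eq_zero_iff r (j:ℕ)).2 (Or.inl hj)]
    rw [(col_eq_one_iff r _ hr).2 (Or.inr (by omega))]
    decide
  · apply pair_filter_card_le
    have hj := j.isLt; have htj := (τ j).isLt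
    rw [ptval N _ (by omega), ptval N _ (by omega)]
    rw [(col_eq_one_iff r _ hr).2 (Or.inl (by omega))]
    rw [(col_eq_zero_iff r _).2 (Or.inr (by omega))]
    decide

lemma Phi_hull (r N : ℕ) (hr : 2 ≤ r) (hN : N = 2*(r-1))
    (σ : Equiv.Perm (Fin (r/2))) (τ : Equiv.Perm (Fin ((r-1)/2))) :
    ∀ B ∈ Phi r N σ τ, (fun _ => ((r-1:ℕ):ℝ) : Fin 1 → ℝ) ∈
      convexHull ℝ ((fun i : Fin (N+1) => (fun _ => ((i:ℕ):ℝ) : Fin 1 → ℝ)) '' (B : Set (Fin (N+1)))) := by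
  intro B hB
  have key : ∀ B : Finset (Fin (N+1)), ((r-1:ℕ):ℝ) ∈ convexHull ℝ
      ((fun i : Fin (N+1) => ((i:ℕ):ℝ)) '' (B : Set (Fin (N+1)))) →
      (fun _ => ((r-1:ℕ):ℝ) : Fin 1 → ℝ) ∈
      convexHull ℝ ((fun i : Fin (N+1) => (fun _ => ((i:ℕ):ℝ) : Fin 1 → ℝ)) '' (B : Set (Fin (N+1)))) :=
    fun B h => hull_bwd _ _ _ h
  apply key
  rcases (mem_Phi r N σ τ B).1 hB with rfl | ⟨j, rfl⟩ | ⟨j, rfl⟩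
  · have : ((fun i : Fin (N+1) => ((i:ℕ):ℝ)) '' ({pt N (r-1)} : Finset (Fin (N+1)))) = {((r-1:ℕ):ℝ)} := by
      simp [ptval N (r-1) (by omega)]
    rw [this]
    exact subset_convexHull ℝ _ (Set.mem_singleton _)
  · have hj := j.isLt; have hsj := (σ j).isLt
    have himg : ((fun i : Fin (N+1) => ((i:ℕ):ℝ)) ''
        (({pt N (j:ℕ), pt N (r + (r-1)/2 + (σ j : ℕ))} : Finset (Fin (N+1))) : Set (Fin (N+1))))
        = {(((j:ℕ):ℕ):ℝ), (((r + (r-1)/2 + (σ j : ℕ)):ℕ):ℝ)} := by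
      rw [Finset.coe_insert, Finset.coe_singleton, Set.image_pair,
        ptval N _ (by omega), ptval N _ (by omega)]
    rw [himg]
    apply mem_hull_pair
    · exact_mod_cast Nat.cast_le.2 (by omega : (j:ℕ) ≤ r - 1)
    · exact_mod_cast Nat.cast_le.2 (by omega : r - 1 ≤ r + (r-1)/2 + (σ j:ℕ))
  · have hj := j.isLt; have htj := (τ j).isLt
    have himg : ((fun i : Fin (N+1) => ((i:ℕ):ℝ)) ''
        (({pt N (r/2 + (j:ℕ)), pt N (r + (τ j : ℕ))} : Finset (Fin (N+1))) : Set (Fin (N+1))))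
        = {(((r/2 + (j:ℕ)):ℕ):ℝ), (((r + (τ j : ℕ)):ℕ):ℝ)} := by
      rw [Finset.coe_insert, Finset.coe_singleton, Set.image_pair,
        ptval N _ (by omega), ptval N _ (by omega)]
    rw [himg]
    apply mem_hull_pair
    · exact_mod_cast Nat.cast_le.2 (by omega : r/2 + (j:ℕ) ≤ r - 1)
    · exact_mod_cast Nat.cast_le.2 (by omega : r - 1 ≤ r + (τ j:ℕ))

lemma Phi_inj (r N : ℕ) (hr : 2 ≤ r) (hN : N = 2*(r-1))
    (σ σ' : Equiv.Perm (Fin (r/2))) (τ τ' : Equiv.Perm (Fin ((r-1)/2)))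
    (h : Phi r N σ τ = Phi r N σ' τ') : σ = σ' ∧ τ = τ' := by
  have hb1 : ∀ j : Fin (r/2), (j:ℕ) ≤ N := fun j => by have := j.isLt; omega
  have hb2 : ∀ s : Fin (r/2), r + (r-1)/2 + (s:ℕ) ≤ N := fun s => by have := s.isLt; omega
  have hb3 : ∀ j : Fin ((r-1)/2), r/2 + (j:ℕ) ≤ N := fun j => by have := j.isLt; omega
  have hb4 : ∀ s : Fin ((r-1)/2), r + (s:ℕ) ≤ N := fun s => by have := s.isLt; omega
  have hrN : r - 1 ≤ N := by omega
  constructor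
  · apply Equiv.ext
    intro j
    have hmem : ({pt N (j:ℕ), pt N (r + (r-1)/2 + (σ j : ℕ))} : Finset (Fin (N+1))) ∈ Phi r N σ' τ' := by
      rw [← h, mem_Phi]
      exact Or.inr (Or.inl ⟨j, rfl⟩)
    have hj := j.isLt; have hsj := (σ j).isLt
    rcases (mem_Phi r N σ' τ' _).1 hmem with heq | ⟨j', heq⟩ | ⟨j', heq⟩
    · have : pt N (j:ℕ) ∈ ({pt N (r-1)} : Finset (Fin (N+1))) := by rw [← heq]; simp
      rw [Finset.mem_singleton] at this
      have := pt_inj N _ _ (hb1 j) hrN this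
      omega
    · have hj' := j'.isLt; have hsj' := (σ' j').isLt
      have h1 : pt N (j:ℕ) ∈ ({pt N (j':ℕ), pt N (r + (r-1)/2 + (σ' j' : ℕ))} : Finset (Fin (N+1))) := by
        rw [← heq]; simp
      have h2 : pt N (r + (r-1)/2 + (σ j : ℕ)) ∈
          ({pt N (j':ℕ), pt N (r + (r-1)/2 + (σ' j' : ℕ))} : Finset (Fin (N+1))) := by
        rw [← heq]; simp
      have h1v := val_of_mem_pair h1 (hb1 j') (hb2 (σ' j'))
      have h2v := val_of_mem_pair h2 (hb1 j') (hb2 (σ' j'))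
      rw [ptval N _ (hb1 j)] at h1v
      rw [ptval N _ (hb2 (σ j))] at h2v
      have hjj' : (j:ℕ) = (j':ℕ) := by omega
      have : (σ j : ℕ) = (σ' j' : ℕ) := by omega
      have hj'eq : j' = j := Fin.ext hjj'.symm
      rw [hj'eq] at this
      exact Fin.ext this
    · have hj' := j'.isLt; have htj' := (τ' j').isLt
      have h1 : pt N (j:ℕ) ∈ ({pt N (r/2 + (j':ℕ)), pt N (r + (τ' j' : ℕ))} : Finset (Fin (N+1))) := by
        rw [← heq]; simp
      have h1v := val_of_mem_pair h1 (hb3 j') (hb4 (τ' j'))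
      rw [ptval N _ (hb1 j)] at h1v
      omega
  · apply Equiv.ext
    intro j
    have hmem : ({pt N (r/2 + (j:ℕ)), pt N (r + (τ j : ℕ))} : Finset (Fin (N+1))) ∈ Phi r N σ' τ' := by
      rw [← h, mem_Phi]
      exact Or.inr (Or.inr ⟨j, rfl⟩)
    have hj := j.isLt; have htj := (τ j).isLt
    rcases (mem_Phi r N σ' τ' _).1 hmem with heq | ⟨j', heq⟩ | ⟨j', heq⟩
    · have : pt N (r/2 + (j:ℕ)) ∈ ({pt N (r-1)} : Finset (Fin (N+1))) := by rw [← heq]; simp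
      rw [Finset.mem_singleton] at this
      have := pt_inj N _ _ (hb3 j) hrN this
      omega
    · have hj' := j'.isLt; have hsj' := (σ' j').isLt
      have h1 : pt N (r/2 + (j:ℕ)) ∈
          ({pt N (j':ℕ), pt N (r + (r-1)/2 + (σ' j' : ℕ))} : Finset (Fin (N+1))) := by
        rw [← heq]; simp
      have h1v := val_of_mem_pair h1 (hb1 j') (hb2 (σ' j'))
      rw [ptval N _ (hb3 j)] at h1v
      omega
    · have hj' := j'.isLt; have htj' := (τ' j').isLt
      have h1 : pt N (r/2 + (j:ℕ)) ∈
          ({pt N (r/2 + (j':ℕ)), pt N (r + (τ' j' : ℕ))} : Finset (Fin (N+1))) := by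
        rw [← heq]; simp
      have h2 : pt N (r + (τ j : ℕ)) ∈
          ({pt N (r/2 + (j':ℕ)), pt N (r + (τ' j' : ℕ))} : Finset (Fin (N+1))) := by
        rw [← heq]; simp
      have h1v := val_of_mem_pair h1 (hb3 j') (hb4 (τ' j'))
      have h2v := val_of_mem_pair h2 (hb3 j') (hb4 (τ' j'))
      rw [ptval N _ (hb3 j)] at h1v
      rw [ptval N _ (hb4 (τ j))] at h2v
      have hjj' : (j:ℕ) = (j':ℕ) := by omega
      have : (τ j : ℕ) = (τ' j' : ℕ) := by omega
      have hj'eq : j' = j := Fin.ext hjj'.symm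
      rw [hj'eq] at this
      exact Fin.ext this
lemma extract (r N : ℕ) (hr : 2 ≤ r) (hN : N = 2*(r-1))
    (P : Finset (Finset (Fin (N+1))))
    (hcard : P.card = r)
    (hdisj : ∀ B ∈ P, ∀ B' ∈ P, B ≠ B' → Disjoint B B')
    (hcover : P.biUnion id = Finset.univ)
    (hs1 : ({pt N (r-1)} : Finset (Fin (N+1))) ∈ P)
    (hs2 : ∀ B ∈ P, B ≠ {pt N (r-1)} →
      ∃ u v : Fin (N+1), (u:ℕ) < r-1 ∧ r-1 < (v:ℕ) ∧ col r (u:ℕ) ≠ col r (v:ℕ) ∧ B = {u, v}) :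
    ∃ (σ : Equiv.Perm (Fin (r/2))) (τ : Equiv.Perm (Fin ((r-1)/2))), P = Phi r N σ τ := by
  have hrN : r - 1 ≤ N := by omega
  -- uniqueness of partners
  have huniq : ∀ u v v' : Fin (N+1), {u, v} ∈ P → {u, v'} ∈ P →
      (u:ℕ) < r-1 → r-1 < (v:ℕ) → r-1 < (v':ℕ) → v = v' := by
    intro u v v' h1 h2 hu hv hv'
    have heq : ({u, v} : Finset (Fin (N+1))) = {u, v'} := by
      by_contra hne
      have := Finset.disjoint_left.1 (hdisj _ h1 _ h2 hne) (Finset.mem_insert_self u {v})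
        (Finset.mem_insert_self u {v'})
      exact this
    have : v ∈ ({u, v'} : Finset (Fin (N+1))) := heq ▸ (by simp)
    rcases (mem_pair v u v').1 this with h | h
    · exfalso; rw [h] at hv; omega
    · exact h
  -- existence of partners
  have hpartner : ∀ u : Fin (N+1), (u:ℕ) < r-1 →
      ∃ v : Fin (N+1), {u, v} ∈ P ∧ r-1 < (v:ℕ) ∧ col r (u:ℕ) ≠ col r (v:ℕ) := by
    intro u hu
    have : u ∈ P.biUnion id := by rw [hcover]; exact Finset.mem_univ u
    rcases Finset.mem_biUnion.1 this with ⟨B, hBP, huB⟩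
    simp only [id_eq] at huB
    have hBne : B ≠ {pt N (r-1)} := by
      rintro rfl
      rw [Finset.mem_singleton] at huB
      rw [huB, ptval N (r-1) hrN] at hu
      omega
    rcases hs2 B hBP hBne with ⟨a, b, ha, hb, hcol, rfl⟩
    rcases (mem_pair u a b).1 huB with rfl | rfl
    · exact ⟨b, hBP, hb, hcol⟩
    · omega
  choose prt hprt1 hprt2 hprt3 using hpartner
  -- the sigma side
  have hjlt1 : ∀ j : Fin (r/2), ((pt N (j:ℕ)):ℕ) < r-1 := by
    intro j
    rw [ptval N _ (by have := j.isLt; omega)]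
    have := j.isLt; omega
  have hv2 : ∀ j : Fin (r/2), r + (r-1)/2 ≤ ((prt (pt N (j:ℕ)) (hjlt1 j)):ℕ) ∧
      ((prt (pt N (j:ℕ)) (hjlt1 j)):ℕ) ≤ N := by
    intro j
    have hgt := hprt2 (pt N (j:ℕ)) (hjlt1 j)
    have hcol := hprt3 (pt N (j:ℕ)) (hjlt1 j)
    have hwlt := (prt (pt N (j:ℕ)) (hjlt1 j)).isLt
    have hc0 : col r ((pt N (j:ℕ)):ℕ) = 0 := by
      rw [ptval N _ (by have := j.isLt; omega)]
      exact (col_eq_zero_iff r (j:ℕ)).2 (Or.inl j.isLt)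
    rw [hc0] at hcol
    set w := prt (pt N (j:ℕ)) (hjlt1 j)
    have hw3 : col r (w:ℕ) = 0 ∨ col r (w:ℕ) = 1 ∨ col r (w:ℕ) = 2 := by omega
    rcases hw3 with h | h | h
    · exact absurd h.symm hcol
    · rcases (col_eq_one_iff r (w:ℕ) hr).1 h with h' | h'
      · omega
      · constructor; exact h'; omega
    · rw [col_eq_two_iff r (w:ℕ) hr] at h; omega
  have hσf : ∃ σf : Fin (r/2) → Fin (r/2),
      ∀ j : Fin (r/2), ((prt (pt N (j:ℕ)) (hjlt1 j)):ℕ) = r + (r-1)/2 + (σf j : ℕ) := by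
    refine ⟨fun j => ⟨((prt (pt N (j:ℕ)) (hjlt1 j)):ℕ) - (r + (r-1)/2), ?_⟩, fun j => ?_⟩
    · have := hv2 j; omega
    · have := hv2 j; simp; omega
  obtain ⟨σf, hσf⟩ := hσf
  have hσinj : Function.Injective σf := by
    intro j j' hjj
    have h1 := hσf j
    have h2 := hσf j'
    have hveq : prt (pt N (j:ℕ)) (hjlt1 j) = prt (pt N (j':ℕ)) (hjlt1 j') := by
      apply Fin.ext
      rw [h1, h2, hjj]
    have hm1 := hprt1 (pt N (j:ℕ)) (hjlt1 j)
    have hm2 := hprt1 (pt N (j':ℕ)) (hjlt1 j')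
    rw [hveq] at hm1
    set w := prt (pt N (j':ℕ)) (hjlt1 j')
    have hBeq : ({pt N (j:ℕ), w} : Finset (Fin (N+1))) = {pt N (j':ℕ), w} := by
      by_contra hne
      have := Finset.disjoint_left.1 (hdisj _ hm1 _ hm2 hne)
        (by simp : w ∈ ({pt N (j:ℕ), w} : Finset (Fin (N+1))))
        (by simp : w ∈ ({pt N (j':ℕ), w} : Finset (Fin (N+1))))
      exact this
    have : pt N (j:ℕ) ∈ ({pt N (j':ℕ), w} : Finset (Fin (N+1))) := hBeq ▸ (by simp)
    rcases (mem_pair _ _ _).1 this with h | h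
    · exact Fin.ext (pt_inj N _ _ (by have := j.isLt; omega) (by have := j'.isLt; omega) h)
    · exfalso
      have := hjlt1 j
      rw [h] at this
      have := hv2 j'
      omega
  -- the tau side
  have hjlt2 : ∀ j : Fin ((r-1)/2), ((pt N (r/2 + (j:ℕ))):ℕ) < r-1 := by
    intro j
    rw [ptval N _ (by have := j.isLt; omega)]
    have := j.isLt; omega
  have hw2 : ∀ j : Fin ((r-1)/2), r ≤ ((prt (pt N (r/2 + (j:ℕ))) (hjlt2 j)):ℕ) ∧
      ((prt (pt N (r/2 + (j:ℕ))) (hjlt2 j)):ℕ) < r + (r-1)/2 := by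
    intro j
    have hgt := hprt2 (pt N (r/2 + (j:ℕ))) (hjlt2 j)
    have hcol := hprt3 (pt N (r/2 + (j:ℕ))) (hjlt2 j)
    have hlt := (prt (pt N (r/2 + (j:ℕ))) (hjlt2 j)).isLt
    have hc1 : col r ((pt N (r/2 + (j:ℕ))):ℕ) = 1 := by
      rw [ptval N _ (by have := j.isLt; omega)]
      exact (col_eq_one_iff r _ hr).2 (Or.inl (by have := j.isLt; omega))
    rw [hc1] at hcol
    set w := prt (pt N (r/2 + (j:ℕ))) (hjlt2 j)
    have hw3 : col r (w:ℕ) = 0 ∨ col r (w:ℕ) = 1 ∨ col r (w:ℕ) = 2 := by omega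
    rcases hw3 with h | h | h
    · rcases (col_eq_zero_iff r (w:ℕ)).1 h with h' | h'
      · omega
      · omega
    · exact absurd h.symm hcol
    · rw [col_eq_two_iff r (w:ℕ) hr] at h; omega
  have hτf : ∃ τf : Fin ((r-1)/2) → Fin ((r-1)/2),
      ∀ j : Fin ((r-1)/2), ((prt (pt N (r/2 + (j:ℕ))) (hjlt2 j)):ℕ) = r + (τf j : ℕ) := by
    refine ⟨fun j => ⟨((prt (pt N (r/2 + (j:ℕ))) (hjlt2 j)):ℕ) - r, ?_⟩, fun j => ?_⟩
    · have := hw2 j; omega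
    · have := hw2 j; simp; omega
  obtain ⟨τf, hτf⟩ := hτf
  have hτinj : Function.Injective τf := by
    intro j j' hjj
    have h1 := hτf j
    have h2 := hτf j'
    have hveq : prt (pt N (r/2 + (j:ℕ))) (hjlt2 j) = prt (pt N (r/2 + (j':ℕ))) (hjlt2 j') := by
      apply Fin.ext
      rw [h1, h2, hjj]
    have hm1 := hprt1 (pt N (r/2 + (j:ℕ))) (hjlt2 j)
    have hm2 := hprt1 (pt N (r/2 + (j':ℕ))) (hjlt2 j')
    rw [hveq] at hm1
    set w := prt (pt N (r/2 + (j':ℕ))) (hjlt2 j')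
    have hBeq : ({pt N (r/2 + (j:ℕ)), w} : Finset (Fin (N+1))) = {pt N (r/2 + (j':ℕ)), w} := by
      by_contra hne
      have := Finset.disjoint_left.1 (hdisj _ hm1 _ hm2 hne)
        (by simp : w ∈ ({pt N (r/2 + (j:ℕ)), w} : Finset (Fin (N+1))))
        (by simp : w ∈ ({pt N (r/2 + (j':ℕ)), w} : Finset (Fin (N+1))))
      exact this
    have : pt N (r/2 + (j:ℕ)) ∈ ({pt N (r/2 + (j':ℕ)), w} : Finset (Fin (N+1))) := hBeq ▸ (by simp)
    rcases (mem_pair _ _ _).1 this with h | h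
    · have := pt_inj N _ _ (by have := j.isLt; omega) (by have := j'.isLt; omega) h
      exact Fin.ext (by omega)
    · exfalso
      have := hjlt2 j
      rw [h] at this
      have := hw2 j'
      omega
  refine ⟨Equiv.ofBijective σf (Finite.injective_iff_bijective.1 hσinj),
    Equiv.ofBijective τf (Finite.injective_iff_bijective.1 hτinj), ?_⟩
  apply Finset.eq_of_subset_of_card_le
  · -- P ⊆ Phi
    intro B hBP
    rw [mem_Phi]
    by_cases hBsing : B = {pt N (r-1)}
    · exact Or.inl hBsing
    rcases hs2 B hBP hBsing with ⟨u, w, hu, hw, hcol, rfl⟩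
    have hwN : (w:ℕ) ≤ N := by have := w.isLt; omega
    have hcu : col r (u:ℕ) = 0 ∨ col r (u:ℕ) = 1 ∨ col r (u:ℕ) = 2 := by omega
    rcases hcu with hc | hc | hc
    · -- u is a left color-0 point
      have hulk : (u:ℕ) < r/2 := by
        rcases (col_eq_zero_iff r (u:ℕ)).1 hc with h | h
        · exact h
        · omega
      set j : Fin (r/2) := ⟨(u:ℕ), hulk⟩ with hj
      have hupt : pt N ((j:ℕ)) = u := (eq_pt_of_val (by omega) rfl).symm
      have hmem : ({u, prt (pt N (j:ℕ)) (hjlt1 j)} : Finset (Fin (N+1))) ∈ P := by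
        rw [← hupt]
        exact hprt1 _ _
      have hweq : w = prt (pt N (j:ℕ)) (hjlt1 j) := by
        apply huniq u w _ hBP hmem hu hw
        have := hv2 j; omega
      refine Or.inr (Or.inl ⟨j, ?_⟩)
      rw [← hupt, hweq]
      congr 1
      congr 1
      apply eq_pt_of_val
      · have := hv2 j; omega
      · rw [hσf j]; rfl
    · -- u is a left color-1 point
      have hulk : r/2 ≤ (u:ℕ) ∧ (u:ℕ) < r-1 := by
        rcases (col_eq_one_iff r (u:ℕ) hr).1 hc with h | h
        · exact h
        · omega
      set j : Fin ((r-1)/2) := ⟨(u:ℕ) - r/2, by omega⟩ with hj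
      have hupt : pt N (r/2 + (j:ℕ)) = u := (eq_pt_of_val (by omega) (by simp [hj]; omega)).symm
      have hmem : ({u, prt (pt N (r/2 + (j:ℕ))) (hjlt2 j)} : Finset (Fin (N+1))) ∈ P := by
        rw [← hupt]
        exact hprt1 _ _
      have hweq : w = prt (pt N (r/2 + (j:ℕ))) (hjlt2 j) := by
        apply huniq u w _ hBP hmem hu hw
        have := hw2 j; omega
      refine Or.inr (Or.inr ⟨j, ?_⟩)
      rw [← hupt, hweq]
      congr 1
      congr 1
      apply eq_pt_of_val
      · have := hw2 j; omega
      · rw [hτf j]; rfl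
    · rw [col_eq_two_iff r (u:ℕ) hr] at hc; omega
  · rw [Phi_card r N hr hN, hcard]

theorem tverbergCount_lower_bound_dim_one_optimal' (r N : ℕ) (hr : 2 ≤ r)
    (hrp : Nat.Prime r) (hN : N = 2 * (r - 1)) :
    ∃ (f : (Fin (N + 1) → ℝ) →ᵃ[ℝ] (Fin 1 → ℝ)) (c : Fin (N + 1) → Fin 3),
      (∀ j : Fin 3,
        (Finset.univ.filter fun i => c i = j).card = if (j : ℕ) = 2 then 1 else r - 1) ∧
      (Function.Injective fun i : Fin (N + 1) => f (Pi.single i 1)) ∧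
      Set.ncard { P : Finset (Finset (Fin (N + 1))) |
        P.card = r ∧
        (∀ B ∈ P, ∀ B' ∈ P, B ≠ B' → Disjoint B B') ∧
        P.biUnion id = Finset.univ ∧
        (∀ B ∈ P, ∀ j : Fin 3, (B.filter fun i => c i = j).card ≤ 1) ∧
        ∃ x : Fin 1 → ℝ, ∀ B ∈ P,
          x ∈ convexHull ℝ ((fun i => f (Pi.single i 1)) '' (B : Set (Fin (N + 1)))) } =
        Nat.factorial ((r - 1 + 1) / 2) * Nat.factorial ((r - 1) / 2) := by
  refine ⟨fAff N, fun i => col r (i:ℕ), ?_, ?_, ?_⟩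
  · intro j
    exact count_cols r N hr hN j
  · intro i i' h
    simp only [fAff_single] at h
    exact Fin.ext (Nat.cast_injective (congrFun h 0))
  · have himg : (fun i : Fin (N+1) => fAff N (Pi.single i 1))
        = fun i : Fin (N+1) => (fun _ => ((i:ℕ):ℝ) : Fin 1 → ℝ) := funext (fAff_single N)
    have hset : { P : Finset (Finset (Fin (N + 1))) |
        P.card = r ∧
        (∀ B ∈ P, ∀ B' ∈ P, B ≠ B' → Disjoint B B') ∧
        P.biUnion id = Finset.univ ∧
        (∀ B ∈ P, ∀ j : Fin 3, (B.filter fun i : Fin (N+1) => col r (i:ℕ) = j).card ≤ 1) ∧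
        ∃ x : Fin 1 → ℝ, ∀ B ∈ P,
          x ∈ convexHull ℝ ((fun i => fAff N (Pi.single i 1)) '' (B : Set (Fin (N + 1)))) }
        = Set.range (fun st : Equiv.Perm (Fin (r/2)) × Equiv.Perm (Fin ((r-1)/2)) =>
            Phi r N st.1 st.2) := by
      ext P
      simp only [Set.mem_setOf_eq, Set.mem_range]
      constructor
      · rintro ⟨h1, h2, h3, h4, x, hx⟩
        rw [himg] at hx
        have hst := struct r N hr hN P h1 h2 h3 h4 x hx
        rcases extract r N hr hN P h1 h2 h3 hst.1 hst.2 with ⟨σ, τ, hPeq⟩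
        exact ⟨(σ, τ), hPeq.symm⟩
      · rintro ⟨⟨σ, τ⟩, rfl⟩
        refine ⟨Phi_card r N hr hN σ τ, Phi_disjoint r N hr hN σ τ, Phi_cover r N hr hN σ τ,
          Phi_rainbow r N hr hN σ τ, ⟨(fun _ => ((r-1:ℕ):ℝ)), ?_⟩⟩
        intro B hB
        rw [himg]
        exact Phi_hull r N hr hN σ τ B hB
    rw [hset]
    have hinj : Function.Injective
        (fun st : Equiv.Perm (Fin (r/2)) × Equiv.Perm (Fin ((r-1)/2)) => Phi r N st.1 st.2) := by
      rintro ⟨σ, τ⟩ ⟨σ', τ'⟩ h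
      obtain ⟨h1, h2⟩ := Phi_inj r N hr hN σ σ' τ τ' h
      simp only [Prod.mk.injEq]
      exact ⟨h1, h2⟩
    rw [← Set.image_univ, Set.ncard_image_of_injective _ hinj, Set.ncard_univ]
    rw [Nat.card_eq_fintype_card, Fintype.card_prod, Fintype.card_perm, Fintype.card_perm,
      Fintype.card_fin, Fintype.card_fin]
    have hrr : r - 1 + 1 = r := by omega
    rw [hrr]

end AuxTverberg

/-- For `d = 1`, a prime `r ≥ 2` and `N = 2(r-1)`, there is an affine map `f` on the
standard `N`-simplex, with vertices colored with 3 colors with color classes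
`|C_0| = |C_1| = r - 1`, `|C_2| = 1` and pairwise distinct vertex images, such that
`T(f) = ⌈(r-1)/2⌉! · ⌊(r-1)/2⌋!`: the lower bound for `d = 1` is optimal. -/

theorem tverbergCount_lower_bound_dim_one_optimal (r N : ℕ) (hr : 2 ≤ r)
    (hrp : Nat.Prime r) (hN : N = 2 * (r - 1)) :
    ∃ (f : (Fin (N + 1) → ℝ) →ᵃ[ℝ] (Fin 1 → ℝ)) (c : Fin (N + 1) → Fin 3),
      (∀ j : Fin 3,
        (Finset.univ.filter fun i => c i = j).card = if (j : ℕ) = 2 then 1 else r - 1) ∧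
      (Function.Injective fun i : Fin (N + 1) => f (Pi.single i 1)) ∧
      tverbergCount 1 N r f c =
        Nat.factorial ((r - 1 + 1) / 2) * Nat.factorial ((r - 1) / 2) := by
  obtain ⟨f, c, hc, hinj, hcount⟩ := tverbergCount_lower_bound_dim_one_optimal' r N hr hrp hN
  exact ⟨f, c, hc, hinj, by rw [tverbergCount]; exact hcount⟩
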